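/- Let J be an unbounded subinterval of ℝ and g : J → ℝ such that g′ exists and is locally absolutely continuous on J, with second derivative g″ ∈ L^p(J) for some p > 1. If g ∈ L^∞(J), then g′ ∈ L^∞(J) and ‖g′‖_{J,∞} ≤ (2^{(p−1)/(2p−1)}·(2p−1)/((p−1)^{(p−1)/(2p−1)}·p^{p/(2p−1)}))·‖g‖_{J,∞}^{(p−1)/(2p−1)}·‖g″‖_{J,p}^{p/(2p−1)}. (This follows from the bound ‖g′‖_{J,∞} ≤ (2^{r/(r+1)}(r+1)/r^{r/(r+1)})‖g‖_{J,∞}^{r/(r+1)}V_J^{1/(r+1)} applied with r = (p−1)/p and V_J = ‖g″‖_{J,p}.) -/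

import Mathlib

open MeasureTheory Set
open scoped ENNReal

set_option maxHeartbeats 1000000 in
/-- **Corollary.** If `g : J → ℝ` (with `J` an unbounded interval) has a derivative `g'` that
is locally absolutely continuous with a.e. derivative `g''`, and `g ∈ L^∞(J)`,
`g'' ∈ L^p(J)` for some `p > 1`, then `g' ∈ L^∞(J)` and
`‖g'‖_{J,∞} ≤ (2^{(p-1)/(2p-1)} (2p-1)/((p-1)^{(p-1)/(2p-1)} p^{p/(2p-1)}))
  ‖g‖_{J,∞}^{(p-1)/(2p-1)} ‖g''‖_{J,p}^{p/(2p-1)}`. -/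
theorem landau_inf_p
    (J : Set ℝ) (hJ : J.OrdConnected) (hJu : ¬ Bornology.IsBounded J)
    (g g' g'' : ℝ → ℝ) (p : ℝ) (hp : 1 < p)
    (hderiv : ∀ x ∈ J, HasDerivWithinAt g (g' x) J x)
    (hint : ∀ a ∈ J, ∀ b ∈ J, IntervalIntegrable g'' volume a b)
    (hftc : ∀ a ∈ J, ∀ b ∈ J, g' b - g' a = ∫ t in a..b, g'' t)
    (hg'' : MemLp g'' (ENNReal.ofReal p) (volume.restrict J))
    (hg : MemLp g ⊤ (volume.restrict J)) :
    MemLp g' ⊤ (volume.restrict J) ∧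
      (eLpNorm g' ⊤ (volume.restrict J)).toReal ≤
        2 ^ ((p - 1) / (2 * p - 1)) * (2 * p - 1) /
            ((p - 1) ^ ((p - 1) / (2 * p - 1)) * p ^ (p / (2 * p - 1))) *
          (eLpNorm g ⊤ (volume.restrict J)).toReal ^ ((p - 1) / (2 * p - 1)) *
            (eLpNorm g'' (ENNReal.ofReal p) (volume.restrict J)).toReal ^ (p / (2 * p - 1)) := by
  have hp0 : (0:ℝ) < p := lt_trans one_pos hp
  have hp1 : (0:ℝ) < p - 1 := by linarith
  have hp2 : (0:ℝ) < 2 * p - 1 := by linarith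
  set μ := volume.restrict J with hμ
  set M : ℝ := (eLpNorm g ⊤ μ).toReal with hMdef
  set V : ℝ := (eLpNorm g'' (ENNReal.ofReal p) μ).toReal with hVdef
  set r : ℝ := (p - 1) / p with hrdef
  have hr : 0 < r := div_pos hp1 hp0
  have hM0 : 0 ≤ M := ENNReal.toReal_nonneg
  have hV0 : 0 ≤ V := ENNReal.toReal_nonneg
  have hJm : MeasurableSet J := hJ.measurableSet
  -- case analysis on which side J is unbounded
  have hside : ¬ BddBelow J ∨ ¬ BddAbove J := by
    rw [isBounded_iff_bddBelow_bddAbove] at hJu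
    tauto
  -- geometry of the interior
  have hgeo : (∀ x ∈ interior J, ∀ h : ℝ, 0 < h →
      ∃ u v : ℝ, u < v ∧ v - u = h ∧ x ∈ Icc u v ∧ Icc u v ⊆ interior J) ∧
      (J \ interior J).Subsingleton := by
    rcases hside with hB | hB
    · -- J unbounded below: use [x - h, x]
      constructor
      · intro x hx h hh
        refine ⟨x - h, x, by linarith, by ring, ⟨by linarith, le_refl x⟩, ?_⟩
        obtain ⟨ε, hε, hball⟩ := Metric.mem_nhds_iff.mp (mem_interior_iff_mem_nhds.mp hx)
        obtain ⟨w, hwJ, hw⟩ := not_bddBelow_iff.mp hB (x - h)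
        intro t ht
        have hsub : Ioo w (x + ε) ⊆ J := by
          intro z hz
          rcases le_or_gt x z with hzx | hzx
          · apply hball
            rw [Metric.mem_ball, Real.dist_eq, abs_lt]
            constructor <;> [linarith [hz.2]; linarith [hz.2]]
          · exact hJ.out hwJ (hball (by rw [Metric.mem_ball, Real.dist_eq]; simp [abs_of_nonneg, hε.le, abs_zero]; linarith [hε])) ⟨hz.1.le, hzx.le⟩
        exact mem_interior.mpr ⟨Ioo w (x + ε), hsub, isOpen_Ioo,
          ⟨by linarith [ht.1], by linarith [ht.2, hε]⟩⟩
      · intro d1 hd1 d2 hd2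
        by_contra hne
        rcases lt_or_gt_of_ne hne with hlt | hlt
        · refine absurd ?_ hd1.2
          obtain ⟨w, hwJ, hw⟩ := not_bddBelow_iff.mp hB (d1 - 1)
          exact mem_interior.mpr ⟨Ioo w d2, fun z hz => hJ.out hwJ hd2.1 ⟨hz.1.le, hz.2.le⟩,
            isOpen_Ioo, ⟨by linarith, hlt⟩⟩
        · refine absurd ?_ hd2.2
          obtain ⟨w, hwJ, hw⟩ := not_bddBelow_iff.mp hB (d2 - 1)
          exact mem_interior.mpr ⟨Ioo w d1, fun z hz => hJ.out hwJ hd1.1 ⟨hz.1.le, hz.2.le⟩,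
            isOpen_Ioo, ⟨by linarith, hlt⟩⟩
    · -- J unbounded above: use [x, x + h]
      constructor
      · intro x hx h hh
        refine ⟨x, x + h, by linarith, by ring, ⟨le_refl x, by linarith⟩, ?_⟩
        obtain ⟨ε, hε, hball⟩ := Metric.mem_nhds_iff.mp (mem_interior_iff_mem_nhds.mp hx)
        obtain ⟨w, hwJ, hw⟩ := not_bddAbove_iff.mp hB (x + h)
        intro t ht
        have hsub : Ioo (x - ε) w ⊆ J := by
          intro z hz
          rcases le_or_gt z x with hzx | hzx
          · apply hball
            rw [Metric.mem_ball, Real.dist_eq, abs_lt]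
            constructor <;> [linarith [hz.1]; linarith [hz.1]]
          · exact hJ.out (hball (by rw [Metric.mem_ball, Real.dist_eq]; simp [abs_zero]; linarith [hε])) hwJ ⟨hzx.le, hz.2.le⟩
        exact mem_interior.mpr ⟨Ioo (x - ε) w, hsub, isOpen_Ioo,
          ⟨by linarith [ht.1, hε], by linarith [ht.2]⟩⟩
      · intro d1 hd1 d2 hd2
        by_contra hne
        rcases lt_or_gt_of_ne hne with hlt | hlt
        · refine absurd ?_ hd2.2
          obtain ⟨w, hwJ, hw⟩ := not_bddAbove_iff.mp hB (d2 + 1)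
          exact mem_interior.mpr ⟨Ioo d1 w, fun z hz => hJ.out hd1.1 hwJ ⟨hz.1.le, hz.2.le⟩,
            isOpen_Ioo, ⟨hlt, by linarith⟩⟩
        · refine absurd ?_ hd1.2
          obtain ⟨w, hwJ, hw⟩ := not_bddAbove_iff.mp hB (d1 + 1)
          exact mem_interior.mpr ⟨Ioo d2 w, fun z hz => hJ.out hd2.1 hwJ ⟨hz.1.le, hz.2.le⟩,
            isOpen_Ioo, ⟨hlt, by linarith⟩⟩
  -- a.e. point of J is interior
  have haeint : ∀ᵐ x ∂μ, x ∈ interior J := by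
    rw [ae_iff]
    show volume.restrict J (interior J)ᶜ = 0
    rw [Measure.restrict_apply (measurableSet_interior.compl)]
    refine measure_mono_null ?_ (hgeo.2.measure_zero volume)
    intro z hz
    exact ⟨hz.2, hz.1⟩
  -- pointwise bound for `g` on the interior
  have hgM : ∀ y ∈ interior J, |g y| ≤ M := by
    have hMae : ∀ᵐ t ∂μ, |g t| ≤ M := by
      have h1 := enorm_ae_le_eLpNormEssSup g μ
      have hfin : eLpNormEssSup g μ ≠ ⊤ := by
        rw [← eLpNorm_exponent_top]; exact hg.2.ne
      filter_upwards [h1] with t ht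
      have h2 := ENNReal.toReal_mono hfin ht
      rw [hMdef, eLpNorm_exponent_top]
      simpa using h2
    intro y hy
    set S : Set ℝ := {t | t ∈ J ∧ |g t| ≤ M} with hSdef
    have hSae : ∀ᵐ t ∂μ, t ∈ S := by
      filter_upwards [hMae, ae_restrict_mem hJm] with t h1 h2
      exact ⟨h2, h1⟩
    have hyc : y ∈ closure S := by
      by_contra hyc
      rw [Metric.mem_closure_iff] at hyc
      push_neg at hyc
      obtain ⟨ε, hε, hεS⟩ := hyc
      obtain ⟨δ, hδ, hball⟩ := Metric.mem_nhds_iff.mp (mem_interior_iff_mem_nhds.mp hy)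
      have hb : Metric.ball y (min ε δ) ⊆ {t | ¬ t ∈ S} := by
        intro t ht htS
        have : dist y t < ε := by
          rw [dist_comm]
          exact lt_of_lt_of_le ht (min_le_left _ _)
        exact absurd this (not_lt.mpr (hεS t htS))
      have hbJ : Metric.ball y (min ε δ) ⊆ J := fun t ht =>
        hball (Metric.mem_ball.mpr (lt_of_lt_of_le (Metric.mem_ball.mp ht) (min_le_right _ _)))
      have h0 : μ {t | ¬ t ∈ S} = 0 := by
        rw [← ae_iff]; exact hSae
      have h1 : μ (Metric.ball y (min ε δ)) = 0 :=
        measure_mono_null hb h0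
      rw [hμ, Measure.restrict_apply measurableSet_ball,
        inter_eq_left.mpr hbJ] at h1
      exact absurd h1 (Metric.measure_ball_pos volume y (lt_min hε hδ)).ne'
    have hcg : ContinuousWithinAt g S y :=
      (((hderiv y (interior_subset hy)).hasDerivAt
        (mem_interior_iff_mem_nhds.mp hy)).continuousAt).continuousWithinAt
    have hne : (nhdsWithin y S).NeBot := mem_closure_iff_nhdsWithin_neBot.mp hyc
    refine le_of_tendsto (hcg.tendsto.abs) ?_
    filter_upwards [self_mem_nhdsWithin] with t ht
    exact ht.2
  -- Hölder bound for increments of g'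
  have hH : ∀ u v : ℝ, u < v → Icc u v ⊆ J →
      ∀ t1 ∈ Icc u v, ∀ t2 ∈ Icc u v, |g' t2 - g' t1| ≤ V * (v - u) ^ r := by
    intro u v huv hsub t1 ht1 t2 ht2
    have hu : u ∈ J := hsub ⟨le_refl u, huv.le⟩
    have hvJ : v ∈ J := hsub ⟨huv.le, le_refl v⟩
    have hvu0 : (0:ℝ) ≤ v - u := by linarith
    rw [hftc t1 (hsub ht1) t2 (hsub ht2)]
    have hIoc : IntegrableOn g'' (Ioc u v) volume := (hint u hu v hvJ).1
    have h1 : |∫ t in t1..t2, g'' t| ≤ ∫ t in uIoc t1 t2, |g'' t| := by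
      have := intervalIntegral.norm_integral_le_integral_norm_uIoc
        (f := g'') (a := t1) (b := t2) (μ := volume)
      simpa [Real.norm_eq_abs] using this
    have hII : uIoc t1 t2 ⊆ Ioc u v := by
      rw [uIoc]
      intro z hz
      exact ⟨lt_of_le_of_lt (le_min ht1.1 ht2.1) hz.1, hz.2.trans (max_le ht1.2 ht2.2)⟩
    have h2 : ∫ t in uIoc t1 t2, |g'' t| ≤ ∫ t in Ioc u v, |g'' t| := by
      simp_rw [← Real.norm_eq_abs]
      exact setIntegral_mono_set hIoc.norm
        (Filter.Eventually.of_forall fun z => norm_nonneg _)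
        (HasSubset.Subset.eventuallyLE hII)
    have h3 : ∫ t in Ioc u v, |g'' t| ≤ V * (v - u) ^ r := by
      have hmeasI : AEStronglyMeasurable g'' (volume.restrict (Ioc u v)) := hIoc.1
      have e1 : ENNReal.ofReal (∫ t in Ioc u v, |g'' t|) =
          eLpNorm g'' 1 (volume.restrict (Ioc u v)) := by
        rw [eLpNorm_one_eq_lintegral_enorm]
        simp_rw [← Real.norm_eq_abs]
        exact ofReal_integral_norm_eq_lintegral_enorm hIoc
      have e2 := eLpNorm_le_eLpNorm_mul_rpow_measure_univ
        (p := 1) (q := ENNReal.ofReal p) (ENNReal.one_le_ofReal.mpr hp.le) hmeasI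
      have e3 : eLpNorm g'' (ENNReal.ofReal p) (volume.restrict (Ioc u v)) ≤
          ENNReal.ofReal V := by
        rw [hVdef, ENNReal.ofReal_toReal hg''.2.ne, hμ]
        exact eLpNorm_mono_measure _
          (Measure.restrict_mono (fun z hz => hsub (Ioc_subset_Icc_self hz)) le_rfl)
      have e4 : (volume.restrict (Ioc u v)) univ ^
            (1 / (1:ℝ≥0∞).toReal - 1 / (ENNReal.ofReal p).toReal) =
          ENNReal.ofReal ((v - u) ^ r) := by
        rw [Measure.restrict_apply_univ, Real.volume_Ioc,
          ENNReal.toReal_ofReal hp0.le]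
        rw [← ENNReal.ofReal_rpow_of_nonneg hvu0 (by positivity : (0:ℝ) ≤ r)]
        congr 1
        rw [hrdef]
        simp only [ENNReal.toReal_one]
        field_simp
      have e5 : ENNReal.ofReal (∫ t in Ioc u v, |g'' t|) ≤
          ENNReal.ofReal (V * (v - u) ^ r) := by
        rw [e1, ENNReal.ofReal_mul hV0]
        calc eLpNorm g'' 1 (volume.restrict (Ioc u v)) ≤ _ := e2
          _ ≤ ENNReal.ofReal V * ENNReal.ofReal ((v - u) ^ r) := by
              rw [e4]; exact mul_le_mul_left e3 _
      exact (ENNReal.ofReal_le_ofReal_iff (by positivity)).mp e5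
    have habs : (0:ℝ) ≤ ∫ t in uIoc t1 t2, |g'' t| :=
      setIntegral_nonneg (measurableSet_uIoc) fun z _ => abs_nonneg _
    linarith
  -- core interval estimate
  have hcore : ∀ u v : ℝ, u < v → Icc u v ⊆ interior J → ∀ s ∈ Icc u v,
      |g' s| ≤ (|g u| + |g v|) / (v - u) + V * (v - u) ^ r := by
    intro u v huv hIJ s hs
    have hIJ' : Icc u v ⊆ J := fun t ht => interior_subset (hIJ ht)
    have hu : u ∈ J := hIJ' ⟨le_refl u, huv.le⟩
    have hvJ : v ∈ J := hIJ' ⟨huv.le, le_refl v⟩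
    have hvu : (0:ℝ) < v - u := sub_pos.mpr huv
    have hD : ∀ t ∈ Icc u v, HasDerivAt g (g' t) t := fun t ht =>
      (hderiv t (hIJ' ht)).hasDerivAt (mem_interior_iff_mem_nhds.mp (hIJ ht))
    have hg'c : ContinuousOn g' (Icc u v) := by
      have hFc : ContinuousOn (fun t => ∫ z in u..t, g'' z) (uIcc u v) :=
        intervalIntegral.continuousOn_primitive_interval' (hint u hu v hvJ) left_mem_uIcc
      rw [uIcc_of_le huv.le] at hFc
      refine ((continuousOn_const (c := g' u)).add hFc).congr ?_
      intro t ht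
      have := hftc u hu t (hIJ' ht)
      show g' t = g' u + ∫ z in u..t, g'' z
      linarith
    have hg'int : IntervalIntegrable g' volume u v :=
      ContinuousOn.intervalIntegrable (by rwa [uIcc_of_le huv.le])
    have hFTC : ∫ t in u..v, g' t = g v - g u :=
      intervalIntegral.integral_eq_sub_of_hasDerivAt
        (fun t ht => hD t (by rwa [uIcc_of_le huv.le] at ht)) hg'int
    have e2 : ∫ t in u..v, (g' t - g' s) = (g v - g u) - (v - u) * g' s := by
      rw [intervalIntegral.integral_sub hg'int intervalIntegrable_const, hFTC,
        intervalIntegral.integral_const]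
      simp [smul_eq_mul]
    have e3 : |∫ t in u..v, (g' t - g' s)| ≤ (V * (v - u) ^ r) * |v - u| := by
      rw [← Real.norm_eq_abs]
      refine intervalIntegral.norm_integral_le_of_norm_le_const ?_
      intro t ht
      rw [Real.norm_eq_abs]
      have htI : t ∈ Icc u v := by
        rw [uIoc_of_le huv.le] at ht
        exact Ioc_subset_Icc_self ht
      exact hH u v huv hIJ' s hs t htI
    rw [abs_of_pos hvu] at e3
    have e4 : |g' s| * (v - u) ≤ (|g u| + |g v|) + V * (v - u) ^ r * (v - u) := by
      have e5 : (v - u) * g' s = (g v - g u) - ∫ t in u..v, (g' t - g' s) := by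
        linarith
      have e6 : |(v - u) * g' s| ≤ |g v - g u| + |∫ t in u..v, (g' t - g' s)| := by
        rw [e5, sub_eq_add_neg]
        exact (abs_add_le _ _).trans (by rw [abs_neg])
      rw [abs_mul, abs_of_pos hvu] at e6
      have e7 : |g v - g u| ≤ |g v| + |g u| := abs_sub _ _
      nlinarith [abs_nonneg (g' s)]
    calc |g' s| = |g' s| * (v - u) / (v - u) := by field_simp
      _ ≤ ((|g u| + |g v|) + V * (v - u) ^ r * (v - u)) / (v - u) := by
          exact (div_le_div_iff_of_pos_right hvu).mpr e4
      _ = (|g u| + |g v|) / (v - u) + V * (v - u) ^ r := by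
          field_simp
  -- pointwise bound for g' on the interior
  have hptw : ∀ h : ℝ, 0 < h → ∀ x ∈ interior J, |g' x| ≤ 2 * M / h + V * h ^ r := by
    intro h hh x hx
    obtain ⟨u, v, huv, hvu, hxuv, hsub⟩ := hgeo.1 x hx h hh
    have h1 := hcore u v huv hsub x hxuv
    have h2 : (|g u| + |g v|) / (v - u) ≤ 2 * M / h := by
      rw [hvu]
      have := hgM u (hsub ⟨le_refl u, huv.le⟩)
      have := hgM v (hsub ⟨huv.le, le_refl v⟩)
      exact (div_le_div_iff_of_pos_right hh).mpr (by linarith)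
    calc |g' x| ≤ (|g u| + |g v|) / (v - u) + V * (v - u) ^ r := h1
      _ ≤ 2 * M / h + V * h ^ r := by rw [hvu] at *; linarith [h2]
  -- measurability of g'
  have hmeas : AEStronglyMeasurable g' μ := by
    refine (measurable_deriv g).aestronglyMeasurable.congr ?_
    filter_upwards [haeint] with x hx
    exact ((hderiv x (interior_subset hx)).hasDerivAt
      (mem_interior_iff_mem_nhds.mp hx)).deriv
  -- the essential sup bound for every h
  have hbound : ∀ h : ℝ, 0 < h →
      eLpNorm g' ⊤ μ ≤ ENNReal.ofReal (2 * M / h + V * h ^ r) := by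
    intro h hh
    rw [eLpNorm_exponent_top]
    refine eLpNormEssSup_le_of_ae_bound ?_
    filter_upwards [haeint] with x hx
    rw [Real.norm_eq_abs]
    exact hptw h hh x hx
  have hmem : MemLp g' ⊤ μ :=
    ⟨hmeas, (hbound 1 one_pos).trans_lt ENNReal.ofReal_lt_top⟩
  refine ⟨hmem, ?_⟩
  set N : ℝ := (eLpNorm g' ⊤ μ).toReal with hNdef
  have hNle : ∀ h : ℝ, 0 < h → N ≤ 2 * M / h + V * h ^ r := by
    intro h hh
    refine ENNReal.toReal_le_of_le_ofReal ?_ (hbound h hh)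
    have : 0 ≤ 2 * M / h := by positivity
    have : 0 ≤ V * h ^ r := by positivity
    linarith
  -- final optimization
  have hNnn : 0 ≤ N := ENNReal.toReal_nonneg
  set a : ℝ := (p - 1) / (2 * p - 1) with hadef
  set b : ℝ := p / (2 * p - 1) with hbdef
  have ha : 0 < a := div_pos hp1 hp2
  have hb : 0 < b := div_pos hp0 hp2
  have hab : a + b = 1 := by rw [hadef, hbdef, ← add_div, div_eq_one_iff_eq hp2.ne']; ring
  have hrb : r * b = a := by rw [hrdef, hbdef, hadef]; field_simp
  rcases eq_or_lt_of_le hV0 with hV | hV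
  · -- V = 0
    have hRHS : 2 ^ a * (2 * p - 1) / ((p - 1) ^ a * p ^ b) * M ^ a * V ^ b = 0 := by
      rw [← hV, Real.zero_rpow hb.ne', mul_zero]
    rw [hRHS]
    by_contra hcon
    push_neg at hcon
    have hNpos : 0 < N := hcon
    have h1 := hNle ((4 * M + 1) / N) (by positivity)
    rw [← hV, zero_mul, add_zero] at h1
    have h2 : 2 * M / ((4 * M + 1) / N) = 2 * M * N / (4 * M + 1) := by
      rw [div_div_eq_mul_div]
    rw [h2] at h1
    have h3 : N * (4 * M + 1) ≤ 2 * M * N := by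
      have h4 : (0:ℝ) < 4 * M + 1 := by positivity
      calc N * (4 * M + 1) = (2 * M * N / (4 * M + 1)) * (4 * M + 1) +
            (N - 2 * M * N / (4 * M + 1)) * (4 * M + 1) := by ring
        _ ≤ 2 * M * N + 0 := by
            rw [div_mul_cancel₀ _ h4.ne']
            have : N - 2 * M * N / (4 * M + 1) ≤ 0 := by linarith
            nlinarith
        _ = 2 * M * N := by ring
    nlinarith
  rcases eq_or_lt_of_le hM0 with hM | hM
  · -- M = 0
    have hRHS : 2 ^ a * (2 * p - 1) / ((p - 1) ^ a * p ^ b) * M ^ a * V ^ b = 0 := by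
      rw [← hM, Real.zero_rpow ha.ne', mul_zero, zero_mul]
    rw [hRHS]
    by_contra hcon
    push_neg at hcon
    have hNpos : 0 < N := hcon
    have hx : (0:ℝ) < N / (2 * (V + 1)) := by positivity
    have h1 := hNle ((N / (2 * (V + 1))) ^ r⁻¹) (Real.rpow_pos_of_pos hx _)
    have h2 : ((N / (2 * (V + 1))) ^ r⁻¹) ^ r = N / (2 * (V + 1)) := by
      rw [← Real.rpow_mul hx.le, inv_mul_cancel₀ hr.ne', Real.rpow_one]
    rw [h2, ← hM, mul_zero, zero_div, zero_add, ← mul_div_assoc] at h1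
    have h3 : N * (2 * (V + 1)) ≤ V * N :=
      (le_div_iff₀ (by positivity : (0:ℝ) < 2 * (V + 1))).mp h1
    nlinarith
  · -- main case : M > 0, V > 0
    obtain ⟨c, hcdef⟩ : ∃ c : ℝ, c = 2 * M / (r * V) := ⟨_, rfl⟩
    have hc : 0 < c := by rw [hcdef]; positivity
    have hMne : Real.log M = Real.log M := rfl
    have hh : (0:ℝ) < c ^ b := Real.rpow_pos_of_pos hc b
    have hcb : c ^ b = c / c ^ a := by
      rw [show b = 1 - a by linarith, Real.rpow_sub hc, Real.rpow_one]
    have hhr : (c ^ b) ^ r = c ^ a := by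
      rw [← Real.rpow_mul hc.le, ← hrb, mul_comm r b]
    have h2Mc : 2 * M / c = r * V := by
      rw [hcdef, div_div_eq_mul_div,
        mul_div_cancel_left₀ _ (by positivity : (0:ℝ) < 2 * M).ne']
    have hLHS : 2 * M / (c ^ b) + V * (c ^ b) ^ r = c ^ a * V * (r + 1) := by
      rw [hhr, hcb]
      have hca : (0:ℝ) < c ^ a := Real.rpow_pos_of_pos hc a
      rw [div_div_eq_mul_div, mul_comm (2 * M) (c ^ a), mul_div_assoc, h2Mc]
      ring
    have hr1 : r + 1 = (2 * p - 1) / p := by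
      rw [hrdef]; field_simp; ring
    have hKpos : (0:ℝ) < 2 ^ a * (2 * p - 1) / ((p - 1) ^ a * p ^ b) :=
      div_pos (mul_pos (Real.rpow_pos_of_pos two_pos a) hp2)
        (mul_pos (Real.rpow_pos_of_pos hp1 a) (Real.rpow_pos_of_pos hp0 b))
    have hposL : (0:ℝ) < c ^ a * V * (r + 1) := by positivity
    have hposR : (0:ℝ) < 2 ^ a * (2 * p - 1) / ((p - 1) ^ a * p ^ b) * M ^ a * V ^ b :=
      mul_pos (mul_pos hKpos (Real.rpow_pos_of_pos hM a)) (Real.rpow_pos_of_pos hV b)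
    have hc_log : Real.log c = Real.log 2 + Real.log M - (Real.log r + Real.log V) := by
      rw [hcdef, Real.log_div (by positivity) (by positivity),
        Real.log_mul two_ne_zero hM.ne', Real.log_mul hr.ne' hV.ne']
    have hr_log : Real.log r = Real.log (p - 1) - Real.log p := by
      rw [hrdef, Real.log_div hp1.ne' hp0.ne']
    have hr1_log : Real.log (r + 1) = Real.log (2 * p - 1) - Real.log p := by
      rw [hr1, Real.log_div hp2.ne' hp0.ne']
    have hlogeq : Real.log (c ^ a * V * (r + 1)) =
        Real.log (2 ^ a * (2 * p - 1) / ((p - 1) ^ a * p ^ b) * M ^ a * V ^ b) := by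
      rw [Real.log_mul (by positivity) (by positivity : (r:ℝ) + 1 ≠ 0),
        Real.log_mul (by positivity) hV.ne', Real.log_rpow hc,
        Real.log_mul (by positivity) (by positivity : (V:ℝ) ^ b ≠ 0),
        Real.log_mul hKpos.ne' (by positivity : (M:ℝ) ^ a ≠ 0),
        Real.log_div (by positivity) (by positivity),
        Real.log_mul (by positivity : ((2:ℝ)) ^ a ≠ 0) hp2.ne',
        Real.log_mul (by positivity : ((p:ℝ) - 1) ^ a ≠ 0) (by positivity : (p:ℝ) ^ b ≠ 0),
        Real.log_rpow two_pos, Real.log_rpow hp1, Real.log_rpow hp0,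
        Real.log_rpow hM, Real.log_rpow hV,
        hc_log, hr_log, hr1_log]
      linear_combination (Real.log p - Real.log V) * hab
    have hEq : c ^ a * V * (r + 1) =
        2 ^ a * (2 * p - 1) / ((p - 1) ^ a * p ^ b) * M ^ a * V ^ b :=
      Real.log_injOn_pos (mem_Ioi.mpr hposL) (mem_Ioi.mpr hposR) hlogeq
    calc N ≤ 2 * M / (c ^ b) + V * (c ^ b) ^ r := hNle (c ^ b) hh
      _ = c ^ a * V * (r + 1) := hLHS
      _ = _ := hEq
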